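/- Let ν < -1 and let μ_ν be the measure on (0,∞) with density x^{2ν+1} dx. Then there exist constants C₁, C₂ > 0 depending only on ν such that for all x > r > 0, C₁·min(1, r/x)·(x−r)^{2ν+2} ≤ μ_ν(B(x,r)) ≤ C₂·min(1, r/x)·(x−r)^{2ν+2}. -/

import Mathlib

open MeasureTheory Set

noncomputable def besselMeasure (ν : ℝ) : Measure ℝ :=
  (volume.restrict (Set.Ioi (0:ℝ))).withDensity fun x => ENNReal.ofReal (x ^ (2*ν+1))

lemma besselMeasure_ball (ν : ℝ) (hν : ν < -1) (x r : ℝ) (hr : 0 < r) (hrx : r < x) :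
    besselMeasure ν (Metric.ball x r) =
      ENNReal.ofReal (((x-r) ^ (2*ν+2) - (x+r) ^ (2*ν+2)) / (-(2*ν+2))) := by
  have ha : 0 < x - r := by linarith
  have hsub : Metric.ball x r ⊆ Ioi (0:ℝ) := by
    rw [Real.ball_eq_Ioo]; exact fun y hy => lt_trans ha hy.1
  rw [besselMeasure, withDensity_apply _ measurableSet_ball,
    Measure.restrict_restrict measurableSet_ball, inter_eq_left.2 hsub,
    Real.ball_eq_Ioo]
  have hint : IntegrableOn (fun y : ℝ => y ^ (2*ν+1)) (Ioo (x-r) (x+r)) := by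
    apply (ContinuousOn.integrableOn_Icc ?_).mono_set Ioo_subset_Icc_self
    intro y hy
    exact (Real.continuousAt_rpow_const y _ (Or.inl (by nlinarith [hy.1]))).continuousWithinAt
  rw [← ofReal_integral_eq_lintegral_ofReal hint
    ((ae_restrict_iff' measurableSet_Ioo).2 (Filter.Eventually.of_forall
      fun y hy => Real.rpow_nonneg (le_of_lt (lt_trans ha hy.1)) _))]
  congr 1
  rw [← MeasureTheory.integral_Ioc_eq_integral_Ioo,
    ← intervalIntegral.integral_of_le (by linarith : x - r ≤ x + r),
    integral_rpow (Or.inr ⟨fun h => by nlinarith [h], by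
      intro h
      rw [Set.mem_uIcc] at h
      rcases h with ⟨h1,_⟩|⟨_,h2⟩ <;> linarith⟩)]
  have hq : 2*ν+1+1 = 2*ν+2 := by ring
  rw [hq]
  have hqneg : 2*ν+2 < 0 := by linarith
  field_simp
  ring_nf

lemma key_ineq (ν x r : ℝ) (hν : ν < -1) (hr : 0 < r) (hrx : r < x) :
    (min 1 (-(2*ν+2)) / (-(2*ν+2))) * (r/x) * (x-r)^(2*ν+2) ≤
      ((x-r)^(2*ν+2) - (x+r)^(2*ν+2)) / (-(2*ν+2)) ∧
    ((x-r)^(2*ν+2) - (x+r)^(2*ν+2)) / (-(2*ν+2)) ≤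
      (2 * max 1 (-(2*ν+2)) / (-(2*ν+2))) * (r/x) * (x-r)^(2*ν+2) := by
  obtain ⟨m, hmq, hm⟩ : ∃ m : ℝ, -(2*ν+2) = m ∧ 0 < m := ⟨-(2*ν+2), rfl, by linarith⟩
  rw [hmq]
  have hqm : (2*ν+2 : ℝ) = -m := by linarith
  rw [hqm]
  have ha : 0 < x - r := by linarith
  have hb : 0 < x + r := by linarith
  set a := x - r with hadef
  set b := x + r with hbdef
  have hu0 : 0 < a / b := div_pos ha hb
  have hu1 : a / b < 1 := (div_lt_one hb).2 (by rw [hadef, hbdef]; linarith)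
  set u := a / b with hudef
  have hbq : b ^ (-m) = a ^ (-m) * u ^ m := by
    have hb' : b = a / u := by field_simp [hudef]; rw [hudef, mul_comm, div_mul_cancel₀ _ hb.ne']
    rw [hb', Real.div_rpow ha.le hu0.le, Real.rpow_neg hu0.le m, div_eq_mul_inv, inv_inv]
  have haq : 0 < a ^ (-m) := Real.rpow_pos_of_pos ha _
  have hL : min 1 m * (1 - u) ≤ 1 - u ^ m := by
    rcases le_total 1 m with h1m | hm1
    · rw [min_eq_left h1m]
      have : u ^ m ≤ u ^ (1:ℝ) := Real.rpow_le_rpow_of_exponent_ge hu0 hu1.le h1m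
      rw [Real.rpow_one] at this; linarith
    · rw [min_eq_right hm1]
      have := rpow_one_add_le_one_add_mul_self (s := u - 1) (by linarith) hm.le hm1
      rw [show (1 : ℝ) + (u - 1) = u by ring] at this
      nlinarith
  have hU : 1 - u ^ m ≤ max 1 m * (1 - u) := by
    rcases le_total 1 m with h1m | hm1
    · rw [max_eq_right h1m]
      have := one_add_mul_self_le_rpow_one_add (s := u - 1) (by linarith) h1m
      rw [show (1 : ℝ) + (u - 1) = u by ring] at this
      nlinarith
    · rw [max_eq_left hm1]
      have : u ^ (1:ℝ) ≤ u ^ m := Real.rpow_le_rpow_of_exponent_ge hu0 hu1.le hm1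
      rw [Real.rpow_one] at this; linarith
  have h1u : 1 - u = 2*r/b := by
    field_simp [hudef]; rw [hudef, one_sub_div hb.ne', div_mul_cancel₀ _ hb.ne']; linarith [hadef, hbdef]
  have htl : r / x ≤ 1 - u := by
    rw [h1u, div_le_div_iff₀ (by linarith) hb, hbdef]; nlinarith
  have htu : 1 - u ≤ 2 * (r / x) := by
    have hx : 0 < x := by linarith
    rw [h1u, div_le_iff₀ hb, hbdef, mul_comm 2 (r/x), mul_assoc, div_mul_eq_mul_div,
      le_div_iff₀ hx]
    nlinarith
  have hmin : 0 < min 1 m := lt_min one_pos hm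
  have hmax : 0 < max 1 m := lt_of_lt_of_le one_pos (le_max_left _ _)
  have hm' : m ≠ 0 := hm.ne'
  constructor
  · rw [hbq, le_div_iff₀ hm]
    have h1 : min 1 m * (r/x) ≤ 1 - u ^ m :=
      le_trans (mul_le_mul_of_nonneg_left htl hmin.le) hL
    calc min 1 m / m * (r / x) * a ^ (-m) * m = (min 1 m * (r/x)) * a ^ (-m) := by
          rw [div_mul_eq_mul_div, div_mul_eq_mul_div, div_mul_eq_mul_div, mul_div_cancel_right₀ _ hm']
      _ ≤ (1 - u ^ m) * a ^ (-m) := mul_le_mul_of_nonneg_right h1 haq.le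
      _ = a ^ (-m) - a ^ (-m) * u ^ m := by ring
  · rw [hbq, div_le_iff₀ hm]
    have h2 : 1 - u ^ m ≤ max 1 m * (2 * (r/x)) :=
      le_trans hU (mul_le_mul_of_nonneg_left htu hmax.le)
    calc (a ^ (-m) - a ^ (-m) * u ^ m) = (1 - u ^ m) * a ^ (-m) := by ring
      _ ≤ (max 1 m * (2 * (r/x))) * a ^ (-m) := mul_le_mul_of_nonneg_right h2 haq.le
      _ = 2 * max 1 m / m * (r / x) * a ^ (-m) * m := by
          rw [div_mul_eq_mul_div, div_mul_eq_mul_div, div_mul_cancel₀ _ hm']; ring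

theorem measure_ball_comparable_of_lt_neg_one (ν : ℝ) (hν : ν < -1) :
    ∃ C₁ C₂ : ℝ, 0 < C₁ ∧ 0 < C₂ ∧ ∀ x r : ℝ, 0 < r → r < x →
      ENNReal.ofReal (C₁ * min 1 (r / x) * (x - r) ^ (2*ν+2)) ≤
        besselMeasure ν (Metric.ball x r) ∧
      besselMeasure ν (Metric.ball x r) ≤
        ENNReal.ofReal (C₂ * min 1 (r / x) * (x - r) ^ (2*ν+2)) := by
  have hm : 0 < -(2*ν+2) := by linarith
  refine ⟨min 1 (-(2*ν+2)) / (-(2*ν+2)), 2 * max 1 (-(2*ν+2)) / (-(2*ν+2)),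
    div_pos (lt_min one_pos hm) hm,
    div_pos (by positivity) hm, fun x r hr hrx => ?_⟩
  have hminrx : min 1 (r/x) = r/x :=
    min_eq_right (le_of_lt ((div_lt_one (by linarith)).2 hrx))
  rw [besselMeasure_ball ν hν x r hr hrx, hminrx]
  obtain ⟨h1, h2⟩ := key_ineq ν x r hν hr hrx
  exact ⟨ENNReal.ofReal_le_ofReal h1, ENNReal.ofReal_le_ofReal h2⟩
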